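/- The ground α-equivalence relation ≈ on nominal terms is symmetric: if t ≈ u then u ≈ t. -/

import Mathlib

/-- Ground nominal terms: t ::= a | f(t₁,...,tₙ) | ⟨a⟩t.
Names and function symbols are both modeled as natural numbers. -/
inductive NTerm : Type
  | name : ℕ → NTerm
  | fn   : ℕ → List NTerm → NTerm
  | abs  : ℕ → NTerm → NTerm

/-- Action of the swapping (a b) on a name. -/
def swapName (a b c : ℕ) : ℕ := if c = a then b else if c = b then a else c

/-- Swapping (a b)·t on ground nominal terms. -/
def NTerm.swap (a b : ℕ) : NTerm → NTerm
  | .name c  => .name (swapName a b c)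
  | .fn f ts => .fn f (ts.attach.map (fun x => NTerm.swap a b x.1))
  | .abs c t => .abs (swapName a b c) (NTerm.swap a b t)
decreasing_by
  all_goals simp_wf
  have := List.sizeOf_lt_of_mem x.2
  omega

/-- The freshness relation a # t on ground nominal terms. -/
inductive Fresh : ℕ → NTerm → Prop
  | name {a b : ℕ} : a ≠ b → Fresh a (.name b)
  | fn {a f} {ts : List NTerm} : (∀ t ∈ ts, Fresh a t) → Fresh a (.fn f ts)
  | absSame {a t} : Fresh a (.abs a t)
  | absDiff {a b t} : a ≠ b → Fresh a t → Fresh a (.abs b t)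

/-- Ground α-equivalence t ≈ u on nominal terms. -/
inductive Aeq : NTerm → NTerm → Prop
  | name (a : ℕ) : Aeq (.name a) (.name a)
  | fn {f} {ts us : List NTerm} : List.Forall₂ Aeq ts us → Aeq (.fn f ts) (.fn f us)
  | absSame {a t u} : Aeq t u → Aeq (.abs a t) (.abs a u)
  | absDiff {a b t u} : a ≠ b → Fresh a u → Aeq t (u.swap a b) →
      Aeq (.abs a t) (.abs b u)

/- ### Auxiliary lemmas -/

@[simp] lemma swap_name (a b c : ℕ) : (NTerm.name c).swap a b = .name (swapName a b c) := by
  rw [NTerm.swap]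

@[simp] lemma swap_fn (a b f : ℕ) (ts : List NTerm) :
    (NTerm.fn f ts).swap a b = .fn f (ts.map (NTerm.swap a b)) := by
  rw [NTerm.swap]; simp [List.attach_map_val]

@[simp] lemma swap_abs (a b c : ℕ) (t : NTerm) :
    (NTerm.abs c t).swap a b = .abs (swapName a b c) (t.swap a b) := by
  rw [NTerm.swap]

set_option maxRecDepth 10000 in
lemma swapName_swapName (a b c : ℕ) : swapName a b (swapName a b c) = c := by
  simp only [swapName]; split_ifs <;> omega

lemma swapName_inj {a b c d : ℕ} (h : swapName a b c = swapName a b d) : c = d := by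
  have := swapName_swapName a b c
  have := swapName_swapName a b d
  rw [h] at *; omega

set_option maxRecDepth 10000 in
lemma swapName_comm (a b c : ℕ) : swapName a b c = swapName b a c := by
  simp only [swapName]; split_ifs <;> omega

lemma sizeOf_lt_fn {t : NTerm} {ts : List NTerm} (h : t ∈ ts) (f : ℕ) :
    sizeOf t < sizeOf (NTerm.fn f ts) := by
  have := List.sizeOf_lt_of_mem h
  simp only [NTerm.fn.sizeOf_spec]
  omega

lemma swap_swap (a b : ℕ) : ∀ t : NTerm, (t.swap a b).swap a b = t
  | .name c => by simp [swapName_swapName]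
  | .fn f ts => by
      simp only [swap_fn, List.map_map, NTerm.fn.injEq, true_and]
      conv_rhs => rw [← List.map_id ts]
      exact List.map_congr_left fun t ht => swap_swap a b t
  | .abs c t => by simp [swapName_swapName, swap_swap a b t]
decreasing_by
  all_goals simp_wf
  all_goals try (have := List.sizeOf_lt_of_mem ht; omega)
  all_goals omega

lemma swap_comm (a b : ℕ) : ∀ t : NTerm, t.swap a b = t.swap b a
  | .name c => by simp [swapName_comm]
  | .fn f ts => by
      simp only [swap_fn, NTerm.fn.injEq, true_and]
      exact List.map_congr_left fun t ht => swap_comm a b t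
  | .abs c t => by simp [swapName_comm, swap_comm a b t]
decreasing_by
  all_goals simp_wf
  all_goals try (have := List.sizeOf_lt_of_mem ht; omega)
  all_goals omega

set_option maxHeartbeats 1000000 in
lemma swapName_equivar (a b c d e : ℕ) :
    swapName a b (swapName c d e) = swapName (swapName a b c) (swapName a b d) (swapName a b e) := by
  unfold swapName
  split_ifs <;> omega

lemma swap_equivar (a b c d : ℕ) : ∀ t : NTerm,
    (t.swap c d).swap a b = (t.swap a b).swap (swapName a b c) (swapName a b d)
  | .name e => by simp only [swap_name]; rw [swapName_equivar]
  | .fn f ts => by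
      simp only [swap_fn, List.map_map, NTerm.fn.injEq, true_and]
      exact List.map_congr_left fun t ht => swap_equivar a b c d t
  | .abs e t => by
      simp only [swap_abs]
      rw [swapName_equivar, swap_equivar a b c d t]
decreasing_by
  all_goals simp_wf
  all_goals try (have := List.sizeOf_lt_of_mem ht; omega)
  all_goals omega

lemma fresh_equivar {c : ℕ} {t : NTerm} (a b : ℕ) (h : Fresh c t) :
    Fresh (swapName a b c) (t.swap a b) := by
  induction h with
  | name hne =>
      simp only [swap_name]
      exact Fresh.name fun h => hne (swapName_inj h)
  | fn _ ih =>
      simp only [swap_fn]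
      exact Fresh.fn fun t ht => by
        obtain ⟨s, hs, rfl⟩ := List.mem_map.mp ht
        exact ih s hs
  | absSame => simpa using Fresh.absSame
  | absDiff hne _ ih =>
      simp only [swap_abs]
      exact Fresh.absDiff (fun h => hne (swapName_inj h)) ih

lemma fresh_of_swap {c a b : ℕ} {t : NTerm} (h : Fresh c (t.swap a b)) (ha : c ≠ a) (hb : c ≠ b) :
    Fresh c t := by
  have := fresh_equivar a b h
  rw [swap_swap] at this
  simpa [swapName, ha, hb] using this

lemma forall₂_map_of_mem {R S : NTerm → NTerm → Prop} {g h : NTerm → NTerm}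
    {ts us : List NTerm} (hF : List.Forall₂ R ts us)
    (him : ∀ t ∈ ts, ∀ u, R t u → S (g t) (h u)) :
    List.Forall₂ S (ts.map g) (us.map h) := by
  induction hF with
  | nil => simp
  | cons hr _ ih =>
      simp only [List.map_cons]
      exact List.Forall₂.cons (him _ (by simp) _ hr)
        (ih fun t ht u hu => him t (by simp [ht]) u hu)

lemma forall₂_flip_of_mem {R : NTerm → NTerm → Prop}
    {ts us : List NTerm} (hF : List.Forall₂ R ts us)
    (him : ∀ t ∈ ts, ∀ u, R t u → R u t) :
    List.Forall₂ R us ts := by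
  induction hF with
  | nil => exact List.Forall₂.nil
  | cons hr _ ih =>
      exact List.Forall₂.cons (him _ (by simp) _ hr)
        (ih fun t ht u hu => him t (by simp [ht]) u hu)

lemma forall₂_exists_left {R : NTerm → NTerm → Prop} {ts us : List NTerm}
    (h : List.Forall₂ R ts us) {u : NTerm} (hu : u ∈ us) : ∃ t ∈ ts, R t u := by
  induction h with
  | nil => simp at hu
  | cons hr _ ih =>
      rcases List.mem_cons.mp hu with rfl | hu
      · exact ⟨_, by simp, hr⟩
      · obtain ⟨t, ht, hrt⟩ := ih hu
        exact ⟨t, by simp [ht], hrt⟩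

/-- α-equivalence preserves freshness (left to right). -/
lemma aeq_fresh {a : ℕ} : ∀ {t u : NTerm}, Aeq t u → Fresh a t → Fresh a u
  | _, _, Aeq.name _, hf => hf
  | _, _, Aeq.fn hF, Fresh.fn hf => by
      refine Fresh.fn fun u hu => ?_
      obtain ⟨t, ht, hr⟩ := forall₂_exists_left hF hu
      exact aeq_fresh hr (hf t ht)
  | _, _, Aeq.absSame h, hf => by
      cases hf with
      | absSame => exact Fresh.absSame
      | absDiff hne hft => exact Fresh.absDiff hne (aeq_fresh h hft)
  | _, _, @Aeq.absDiff c d t u hcd hfu h, hf => by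
      cases hf with
      | absSame => exact Fresh.absDiff hcd hfu
      | absDiff hne hft =>
          have hfs := aeq_fresh h hft
          by_cases had : a = d
          · subst had; exact Fresh.absSame
          · exact Fresh.absDiff had (fresh_of_swap hfs hne had)
termination_by t _ _ _ => sizeOf t
decreasing_by
  all_goals simp_wf
  all_goals try (have := List.sizeOf_lt_of_mem ht; omega)
  all_goals omega

/-- α-equivalence is equivariant. -/
lemma aeq_equivar (a b : ℕ) : ∀ {t u : NTerm}, Aeq t u → Aeq (t.swap a b) (u.swap a b)
  | _, _, Aeq.name c => by simpa using Aeq.name _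
  | _, _, Aeq.fn hF => by
      simp only [swap_fn]
      exact Aeq.fn (forall₂_map_of_mem hF fun t ht u hu => aeq_equivar a b hu)
  | _, _, Aeq.absSame h => by
      simpa using Aeq.absSame (aeq_equivar a b h)
  | _, _, Aeq.absDiff hcd hfu h => by
      simp only [swap_abs]
      refine Aeq.absDiff (fun he => hcd (swapName_inj he)) (fresh_equivar a b hfu) ?_
      rw [← swap_equivar]
      exact aeq_equivar a b h
termination_by t _ _ => sizeOf t
decreasing_by
  all_goals simp_wf
  all_goals try (have := List.sizeOf_lt_of_mem ht; omega)
  all_goals omega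

/-- ground α-equivalence is symmetric. -/
theorem aeq_symm (t u : NTerm) (h : Aeq t u) : Aeq u t :=
  match t, u, h with
  | _, _, Aeq.name c => Aeq.name c
  | _, _, @Aeq.fn f ts us hF =>
      Aeq.fn (forall₂_flip_of_mem hF fun t ht u hu => aeq_symm t u hu)
  | _, _, @Aeq.absSame c t' u' h => Aeq.absSame (aeq_symm t' u' h)
  | _, _, @Aeq.absDiff a b t' u' hne hfu h => by
      have hsym : Aeq (u'.swap a b) t' := aeq_symm t' (u'.swap a b) h
      have hb : Fresh b (u'.swap a b) := by
        have := fresh_equivar a b hfu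
        simpa [swapName] using this
      refine Aeq.absDiff (Ne.symm hne) (aeq_fresh hsym hb) ?_
      have := aeq_equivar a b hsym
      rw [swap_swap] at this
      rw [swap_comm b a]
      exact this
termination_by sizeOf t
decreasing_by
  all_goals simp_wf
  all_goals try (have := List.sizeOf_lt_of_mem ht; omega)
  all_goals omega
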